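/- arXiv:1403.3007 — 4 statements merged into one kernel-verified Lean document; each statement's English description precedes it below -/
import Mathlib

section
/- Let S be a metric space and Z a finite collection of subsets of S. Suppose there exists a point p ∈ S such that no open ball around p is contained in any single zone of Z. If moreover for every i ∈ ℕ there exists a point pᵢ with d(pᵢ, p) < 1/(i+1) and pᵢ ∉ Z_{i mod |Z|}, and S is path-connected within small balls around p (every pair of points in a ball around p is joined by a path inside that ball), then there exists a continuous function f : [0,1] → S that cannot be covered by a finite sequence of zones: i.e., there is no finite sequence 0 = θ₀ < ... < θ_k = 1 and zones Z₀,...,Z_k with f([θᵢ, θᵢ₊₁)) ⊆ Zᵢ for all i < k and f(θ_k) ∈ Z_k. -/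
/-- Theorem 1 (converse direction): if some point `p` of `S` has no open ball around it
contained in a single zone, and points `pts i` witness this while avoiding zone `i mod m`,
and `S` is path-connected within small balls around `p`, then there is a continuous
trajectory that cannot be covered by a finite sequence of zones. -/
theorem trajectory_not_coverable
    {S : Type*} [MetricSpace S] (m : ℕ) (hm : 0 < m) (zones : Fin m → Set S)
    (p : S)
    (hp : ∀ r : ℝ, 0 < r → ∀ i : Fin m, ¬ (Metric.ball p r ⊆ zones i))
    (pts : ℕ → S)
    (hpts : ∀ i : ℕ, dist (pts i) p < 1 / ((i : ℝ) + 1) ∧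
      pts i ∉ zones ⟨i % m, Nat.mod_lt i hm⟩)
    (hpath : ∀ r : ℝ, 0 < r → ∀ x ∈ Metric.ball p r, ∀ y ∈ Metric.ball p r,
      JoinedIn (Metric.ball p r) x y) :
    ∃ f : ℝ → S, ContinuousOn f (Set.Icc 0 1) ∧
      ¬ ∃ (k : ℕ) (θ : ℕ → ℝ) (zs : ℕ → Set S),
        θ 0 = 0 ∧ θ k = 1 ∧
        (∀ i < k, θ i < θ (i + 1)) ∧
        (∀ i ≤ k, ∃ j : Fin m, zs i = zones j) ∧
        (∀ i < k, ∀ t ∈ Set.Ico (θ i) (θ (i + 1)), f t ∈ zs i) ∧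
        f (θ k) ∈ zs k := by
  classical
  have hpos : ∀ n : ℕ, (0:ℝ) < 1 / ((n:ℝ) + 1) := by
    intro n; positivity
  have hmem : ∀ n : ℕ, pts n ∈ Metric.ball p (1 / ((n:ℝ)+1)) := by
    intro n; simpa [Metric.mem_ball] using (hpts n).1
  have hmem' : ∀ n : ℕ, pts (n+1) ∈ Metric.ball p (1 / ((n:ℝ)+1)) := by
    intro n
    have h1 := (hpts (n+1)).1
    refine Metric.mem_ball.2 (lt_trans h1 ?_)
    apply one_div_lt_one_div_of_lt
    · positivity
    · push_cast; linarith
  have hJ : ∀ n : ℕ, JoinedIn (Metric.ball p (1/((n:ℝ)+1))) (pts n) (pts (n+1)) :=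
    fun n => hpath _ (hpos n) _ (hmem n) _ (hmem' n)
  set γ : ∀ n : ℕ, Path (pts n) (pts (n+1)) := fun n => (hJ n).somePath with hγdef
  have hγmem : ∀ (n : ℕ) (s : ℝ), (γ n).extend s ∈ Metric.ball p (1/((n:ℝ)+1)) := by
    intro n s
    have h1 : (γ n).extend s ∈ Set.range (γ n).extend := Set.mem_range_self _
    rw [Path.extend_range] at h1
    obtain ⟨t, ht⟩ := h1
    rw [← ht]
    exact (hJ n).somePath_mem t
  set g : ℝ → S := fun s => (γ ⌊s⌋₊).extend (s - ⌊s⌋₊) with hgdef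
  -- basic equality lemmas
  have heq : ∀ n : ℕ, ∀ s : ℝ, (n:ℝ) ≤ s → s ≤ (n:ℝ)+1 → g s = (γ n).extend (s - n) := by
    intro n s h1 h2
    rcases eq_or_lt_of_le h2 with h2 | h2
    · have hf : ⌊s⌋₊ = n + 1 := by
        rw [h2]; exact_mod_cast Nat.floor_natCast (n+1)
      have : g s = (γ (n+1)).extend (s - (n+1)) := by
        show (γ ⌊s⌋₊).extend (s - ⌊s⌋₊) = _
        rw [hf]; push_cast; ring_nf
      rw [this, h2]
      have e1 : ((n:ℝ)+1) - ((n:ℝ)+1) = 0 := by ring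
      have e2 : ((n:ℝ)+1) - (n:ℝ) = 1 := by ring
      rw [e1, e2, Path.extend_zero, Path.extend_one]
    · have hf : ⌊s⌋₊ = n := by
        rw [Nat.floor_eq_iff (le_trans (Nat.cast_nonneg n) h1)]
        exact ⟨h1, by push_cast; linarith⟩
      show (γ ⌊s⌋₊).extend (s - ⌊s⌋₊) = _
      rw [hf]
  have heq0 : ∀ s : ℝ, s ≤ 1 → g s = (γ 0).extend s := by
    intro s hs
    rcases eq_or_lt_of_le hs with hs | hs
    · have h := heq 0 s (by rw [hs]; norm_num) (by rw [hs]; norm_num)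
      simpa using h
    · have hf : ⌊s⌋₊ = 0 := Nat.floor_eq_zero.2 hs
      show (γ ⌊s⌋₊).extend (s - ⌊s⌋₊) = _
      rw [hf]
      norm_num
  -- continuity of g
  have hcontaux : ∀ n : ℕ, Continuous (fun s : ℝ => (γ n).extend (s - n)) := by
    intro n
    exact (γ n).continuous_extend.comp (continuous_id.sub continuous_const)
  have hgcont : Continuous g := by
    rw [continuous_iff_continuousAt]
    intro x
    rcases lt_or_ge x 1 with hx | hx
    · refine ((hcontaux 0).continuousAt (x := x)).congr ?_
      refine Filter.eventuallyEq_of_mem (Iio_mem_nhds hx) (fun s hs => ?_)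
      have h := heq0 s (le_of_lt (Set.mem_Iio.1 hs))
      simpa using h.symm
    · set n := ⌊x⌋₊ with hn
      have hn1 : 1 ≤ n := Nat.le_floor (by exact_mod_cast hx)
      have hnx : (n:ℝ) ≤ x := Nat.floor_le (by linarith)
      have hxn : x < (n:ℝ) + 1 := Nat.lt_floor_add_one x
      rcases eq_or_lt_of_le hnx with hxeq | hxlt
      · -- x = n, junction point
        obtain ⟨l, hl⟩ : ∃ l, n = l + 1 := ⟨n - 1, by omega⟩
        have hL : ContinuousWithinAt g (Set.Icc ((l:ℝ)) ((l:ℝ)+1)) x := by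
          refine ContinuousWithinAt.congr ((hcontaux l).continuousWithinAt) ?_ ?_
          · intro s hs; exact heq l s hs.1 hs.2
          · refine heq l x ?_ ?_ <;> rw [← hxeq] <;> push_cast [hl] <;> linarith
        have hR : ContinuousWithinAt g (Set.Icc ((n:ℝ)) ((n:ℝ)+1)) x := by
          refine ContinuousWithinAt.congr ((hcontaux n).continuousWithinAt) ?_ ?_
          · intro s hs; exact heq n s hs.1 hs.2
          · exact heq n x hnx (le_of_lt hxn)
        have hun := hL.union hR
        have hseteq : Set.Icc ((l:ℝ)) ((l:ℝ)+1) ∪ Set.Icc ((n:ℝ)) ((n:ℝ)+1)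
            = Set.Icc ((l:ℝ)) ((n:ℝ)+1) := by
          rw [hl]; push_cast
          exact Set.Icc_union_Icc_eq_Icc (by linarith) (by linarith)
        rw [hseteq] at hun
        refine hun.continuousAt (Icc_mem_nhds ?_ ?_)
        · rw [← hxeq, hl]; push_cast; linarith
        · linarith
      · -- n < x < n+1
        refine ((hcontaux n).continuousAt.congr ?_)
        refine Filter.eventuallyEq_of_mem (Ioo_mem_nhds hxlt hxn) (fun s hs => ?_)
        exact (heq n s (le_of_lt hs.1) (le_of_lt hs.2)).symm
  -- the trajectory
  set f : ℝ → S := fun t => if t < 1 then g (t / (1 - t)) else p with hfdef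
  -- key value computation
  have hval : ∀ n : ℕ, f ((n:ℝ)/((n:ℝ)+1)) = pts n := by
    intro n
    have hd : (0:ℝ) < (n:ℝ)+1 := by positivity
    have ht1 : (n:ℝ)/((n:ℝ)+1) < 1 := by
      rw [div_lt_one hd]; linarith
    have hs : ((n:ℝ)/((n:ℝ)+1)) / (1 - (n:ℝ)/((n:ℝ)+1)) = (n:ℝ) := by
      field_simp
      ring
    show (if ((n:ℝ)/((n:ℝ)+1)) < 1 then g (((n:ℝ)/((n:ℝ)+1)) / (1 - (n:ℝ)/((n:ℝ)+1))) else p) = pts n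
    rw [if_pos ht1, hs]
    have := heq n ((n:ℝ)) le_rfl (by linarith)
    rw [this]
    simp
  -- distance bound
  have hdist : ∀ n : ℕ, ∀ t : ℝ, (n:ℝ)/((n:ℝ)+1) < t → t < 1 →
      dist (f t) p < 1/((n:ℝ)+1) := by
    intro n t htn ht1
    have hd : (0:ℝ) < (n:ℝ)+1 := by positivity
    have h1t : (0:ℝ) < 1 - t := by linarith
    have hsn : (n:ℝ) ≤ t / (1 - t) := by
      rw [le_div_iff₀ h1t]
      have : (n:ℝ) < t * ((n:ℝ)+1) := by
        have := (div_lt_iff₀ hd).1 htn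
        linarith
      nlinarith
    have hfl : n ≤ ⌊t / (1-t)⌋₊ := Nat.le_floor hsn
    have hb := hγmem ⌊t / (1-t)⌋₊ (t/(1-t) - ⌊t/(1-t)⌋₊)
    have hft : f t = (γ ⌊t/(1-t)⌋₊).extend (t/(1-t) - ⌊t/(1-t)⌋₊) := by
      show (if t < 1 then g (t / (1 - t)) else p) = _
      rw [if_pos ht1]
    rw [hft]
    refine lt_of_lt_of_le (Metric.mem_ball.1 hb) ?_
    apply one_div_le_one_div_of_le
    · positivity
    · have : (n:ℝ) ≤ (⌊t/(1-t)⌋₊ : ℝ) := by exact_mod_cast hfl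
      linarith
  refine ⟨f, ?_, ?_⟩
  · -- continuity on [0,1]
    intro x hx
    rcases lt_or_ge x 1 with hx1 | hx1
    · apply ContinuousAt.continuousWithinAt
      have hc : ContinuousAt (fun t : ℝ => g (t / (1 - t))) x := by
        apply hgcont.continuousAt.comp
        exact (continuous_id.continuousAt).div
          ((continuous_const.sub continuous_id).continuousAt) (by simp; linarith)
      refine hc.congr ?_
      refine Filter.eventuallyEq_of_mem (Iio_mem_nhds hx1) (fun s hs => ?_)
      exact (if_pos (show s < 1 from hs)).symm
    · have hx1' : x = 1 := le_antisymm hx.2 hx1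
      subst hx1'
      have hf1 : f 1 = p := by simp [hfdef]
      rw [ContinuousWithinAt, hf1, Metric.tendsto_nhdsWithin_nhds]
      intro ε hε
      obtain ⟨n, hn⟩ := exists_nat_one_div_lt hε
      refine ⟨1/((n:ℝ)+1), by positivity, ?_⟩
      intro t ht hd
      rcases eq_or_lt_of_le ht.2 with h | h
      · rw [h, hf1]; simpa using hε
      · have htn : (n:ℝ)/((n:ℝ)+1) < t := by
          have : 1 - t < 1/((n:ℝ)+1) := by
            rw [Real.dist_eq] at hd
            rw [abs_lt] at hd
            linarith [hd.1]
          have hd' : (0:ℝ) < (n:ℝ)+1 := by positivity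
          have h2 := (lt_div_iff₀ hd').1 this
          rw [div_lt_iff₀ hd']
          nlinarith [h2]
        calc dist (f t) p < 1/((n:ℝ)+1) := hdist n t htn h
          _ < ε := by exact_mod_cast hn
  · -- the trajectory cannot be covered
    rintro ⟨k, θ, zs, hθ0, hθk, hstrict, hzone, hcov, -⟩
    have hk : 1 ≤ k := by
      by_contra h
      have : k = 0 := by omega
      subst this
      rw [hθ0] at hθk
      norm_num at hθk
    have hkk : k - 1 + 1 = k := by omega
    obtain ⟨j, hj⟩ := hzone (k-1) (by omega)
    have hθlt : θ (k-1) < 1 := by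
      have := hstrict (k-1) (by omega)
      rwa [hkk, hθk] at this
    obtain ⟨n₀, hn₀⟩ := exists_nat_one_div_lt (by linarith : (0:ℝ) < 1 - θ (k-1))
    set n := j.val + m * (n₀ + 1) with hndef
    have hnmod : n % m = j.val := by
      rw [hndef, Nat.add_mul_mod_self_left, Nat.mod_eq_of_lt j.isLt]
    have hn₀n : n₀ + 1 ≤ n := by
      calc n₀ + 1 ≤ m * (n₀ + 1) := Nat.le_mul_of_pos_left _ hm
        _ ≤ n := Nat.le_add_left _ _
    -- the time
    set t := (n:ℝ)/((n:ℝ)+1) with htdef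
    have hd : (0:ℝ) < (n:ℝ)+1 := by positivity
    have ht1 : t < 1 := by rw [htdef, div_lt_one hd]; linarith
    have htrec : 1 - t = 1/((n:ℝ)+1) := by rw [htdef]; field_simp; ring
    have hle : 1/((n:ℝ)+1) ≤ 1/((n₀:ℝ)+1) := by
      apply one_div_le_one_div_of_le
      · positivity
      · have : (n₀:ℝ) + 1 ≤ (n:ℝ) := by exact_mod_cast hn₀n
        linarith
    have htθ : θ (k-1) ≤ t := by
      have : 1 - t < 1 - θ (k-1) := by
        rw [htrec]; exact lt_of_le_of_lt hle hn₀
      linarith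
    have hmem : f t ∈ zs (k-1) := by
      refine hcov (k-1) (by omega) t ⟨htθ, ?_⟩
      rw [hkk, hθk]; exact ht1
    rw [hval n, hj] at hmem
    have hnot := (hpts n).2
    have hfin : (⟨n % m, Nat.mod_lt n hm⟩ : Fin m) = j := Fin.ext hnmod
    rw [hfin] at hnot
    exact hnot hmem
end

section
/- Let G be a graph drawn in the Euclidean plane via an injective position map p : V(G) → ℝ², such that the drawing is planar: for any two distinct edges uv and u'v', the open line segments (p_u, p_v) and (p_{u'}, p_{v'}) do not intersect, and no vertex position lies in the open segment of a non-incident edge. Define S = ⋃ over edges uv of the closed segment [p_u, p_v], together with the points p_w for isolated vertices w, and the zone Z_u = {p_u} ∪ ⋃_{uv ∈ E(G)} [p_u, p_v]. Then each node u follows the specific geocasting principle: for every p ∈ Z_u, a node v minimizing the intrinsic distance d_S(p, p_w) over all nodes w satisfies v = u or uv ∈ E(G). -/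
open scoped ENNReal

/-- The intrinsic (path-length) distance inside a subset `S` of the plane:
the infimum of the lengths (total variations) of continuous curves from `x` to `y`
staying inside `S`. -/
noncomputable def intrinsicDist (S : Set (EuclideanSpace ℝ (Fin 2)))
    (x y : EuclideanSpace ℝ (Fin 2)) : ℝ≥0∞ :=
  ⨅ (γ : ℝ → EuclideanSpace ℝ (Fin 2)) (_ : ContinuousOn γ (Set.Icc 0 1))
    (_ : Set.MapsTo γ (Set.Icc 0 1) S) (_ : γ 0 = x) (_ : γ 1 = y),
    eVariationOn γ (Set.Icc 0 1)

lemma intrinsicDist_self {S : Set (EuclideanSpace ℝ (Fin 2))}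
    {c : EuclideanSpace ℝ (Fin 2)} (hc : c ∈ S) : intrinsicDist S c c = 0 := by
  refine le_antisymm ?_ zero_le
  refine iInf_le_of_le (fun _ => c) (iInf_le_of_le continuousOn_const
    (iInf_le_of_le (fun t _ => hc) (iInf_le_of_le rfl (iInf_le_of_le rfl ?_))))
  refine le_of_eq (eVariationOn.constant_on ?_)
  rintro x ⟨_, _, rfl⟩ y ⟨_, _, rfl⟩
  rfl

lemma intrinsicDist_le_edist {S : Set (EuclideanSpace ℝ (Fin 2))}
    {a b : EuclideanSpace ℝ (Fin 2)} (hab : segment ℝ a b ⊆ S) :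
    intrinsicDist S a b ≤ edist a b := by
  set γ : ℝ → EuclideanSpace ℝ (Fin 2) := fun t : ℝ => AffineMap.lineMap a b t with hγ
  have hlip : LipschitzWith (nndist a b) γ := lipschitzWith_lineMap a b
  have hmaps : Set.MapsTo γ (Set.Icc 0 1) S := by
    intro t ht
    apply hab
    rw [segment_eq_image_lineMap]
    exact ⟨t, ht, rfl⟩
  refine iInf_le_of_le γ (iInf_le_of_le hlip.continuous.continuousOn
    (iInf_le_of_le hmaps (iInf_le_of_le (by simp [hγ]) (iInf_le_of_le (by simp [hγ]) ?_))))
  have h1 : eVariationOn (id : ℝ → ℝ) (Set.Icc 0 1) ≤ 1 := by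
    have := (monotone_id.monotoneOn (Set.Icc (0:ℝ) 1)).eVariationOn_le
      (Set.left_mem_Icc.2 zero_le_one) (Set.right_mem_Icc.2 zero_le_one)
    simpa using this
  calc eVariationOn γ (Set.Icc (0:ℝ) 1)
      = eVariationOn (γ ∘ id) (Set.Icc (0:ℝ) 1) := rfl
    _ ≤ (nndist a b : ℝ≥0∞) * eVariationOn (id : ℝ → ℝ) (Set.Icc 0 1) :=
        hlip.lipschitzOnWith.comp_eVariationOn_le (Set.mapsTo_id _)
    _ ≤ (nndist a b : ℝ≥0∞) * 1 := by gcongr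
    _ = edist a b := by rw [mul_one, edist_nndist]

lemma isClosed_segment' (a b : EuclideanSpace ℝ (Fin 2)) : IsClosed (segment ℝ a b) := by
  have : IsCompact (segment ℝ a b) := by
    rw [segment_eq_image_lineMap]
    exact isCompact_Icc.image (LipschitzWith.continuous (lipschitzWith_lineMap _ _))
  exact this.isClosed

/-- in a planar straight-line embedding of a graph `G`, with
`S` the union of the edge segments (and isolated vertex positions) and
`Z_u = {p_u} ∪ ⋃_{uv ∈ E(G)} [p_u, p_v]`, each node `u` follows the specific
geocasting principle: for every point of `Z_u`, some node minimizing the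
intrinsic distance in `S` is `u` itself or a neighbor of `u`. -/
theorem planar_specific_geocasting
    {V : Type*} [Fintype V] (G : SimpleGraph V)
    (p : V → EuclideanSpace ℝ (Fin 2)) (hp : Function.Injective p)
    (hplanar : ∀ u v u' v' : V, G.Adj u v → G.Adj u' v' →
      s(u, v) ≠ s(u', v') →
      openSegment ℝ (p u) (p v) ∩ openSegment ℝ (p u') (p v') = ∅)
    (hvert : ∀ u v w : V, G.Adj u v → w ≠ u → w ≠ v →
      p w ∉ openSegment ℝ (p u) (p v))
    (S : Set (EuclideanSpace ℝ (Fin 2)))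
    (hS : S = (⋃ (u : V) (v : V) (_ : G.Adj u v), segment ℝ (p u) (p v)) ∪
      (⋃ (w : V) (_ : ∀ x : V, ¬ G.Adj w x), {p w}))
    (Z : V → Set (EuclideanSpace ℝ (Fin 2)))
    (hZ : ∀ u, Z u = {p u} ∪ ⋃ (v : V) (_ : G.Adj u v), segment ℝ (p u) (p v))
    (u : V) :
    ∀ q ∈ Z u, ∃ v : V,
      (∀ w : V, intrinsicDist S q (p v) ≤ intrinsicDist S q (p w)) ∧
      (v = u ∨ G.Adj u v) := by
  intro q hq
  rw [hZ] at hq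
  have hsegS : ∀ {x y : V}, G.Adj x y → segment ℝ (p x) (p y) ⊆ S := by
    intro x y hxy
    rw [hS]
    exact Set.subset_union_left.trans' <|
      (Set.subset_iUnion₂ (s := fun x y => ⋃ (_ : G.Adj x y), segment ℝ (p x) (p y)) x y).trans'
      (Set.subset_iUnion (fun _ : G.Adj x y => segment ℝ (p x) (p y)) hxy)
  rcases hq with hq | hq
  · -- q = p u
    rw [Set.mem_singleton_iff] at hq
    subst hq
    have hpu : p u ∈ S := by
      by_cases hex : ∃ x, G.Adj u x
      · obtain ⟨x, hx⟩ := hex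
        exact hsegS hx (left_mem_segment _ _ _)
      · rw [hS]
        push_neg at hex
        refine Set.mem_union_right _ ?_
        exact Set.mem_iUnion₂.2 ⟨u, hex, rfl⟩
    refine ⟨u, fun w => ?_, Or.inl rfl⟩
    rw [intrinsicDist_self hpu]
    exact zero_le
  · -- q on an edge at u
    rw [Set.mem_iUnion] at hq
    obtain ⟨v, hv⟩ := hq
    rw [Set.mem_iUnion] at hv
    obtain ⟨hadj, hqseg⟩ := hv
    set a := p u with ha
    set b := p v with hb
    have hab : a ≠ b := fun h => hadj.ne (hp h)
    -- upper bounds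
    have hua : intrinsicDist S q a ≤ edist q a :=
      intrinsicDist_le_edist <| ((convex_segment a b).segment_subset hqseg
        (left_mem_segment _ _ _)).trans (hsegS hadj)
    have hub : intrinsicDist S q b ≤ edist q b :=
      intrinsicDist_le_edist <| ((convex_segment a b).segment_subset hqseg
        (right_mem_segment _ _ _)).trans (hsegS hadj)
    -- vertex positions are never in the open segment
    have hvnot : ∀ w : V, p w ∉ openSegment ℝ a b := by
      intro w hw
      by_cases hwu : w = u
      · subst hwu; rw [left_mem_openSegment_iff] at hw; exact hab hw
      by_cases hwv : w = v
      · subst hwv; rw [right_mem_openSegment_iff] at hw; exact hab hw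
      exact hvert u v w hadj hwu hwv hw
    -- lower bound: any curve to any vertex has length at least min (edist q a) (edist q b)
    have hlow : ∀ w : V, min (edist q a) (edist q b) ≤ intrinsicDist S q (p w) := by
      intro w
      by_cases hqe : q = a ∨ q = b
      · rcases hqe with h | h <;> subst h <;> simp
      push_neg at hqe
      have hqopen : q ∈ openSegment ℝ a b := by
        rw [← insert_endpoints_openSegment] at hqseg
        rcases hqseg with h | h | h
        · exact absurd h hqe.1
        · exact absurd h hqe.2
        · exact h
      refine le_iInf fun γ => le_iInf fun hcont => le_iInf fun hmaps =>
        le_iInf fun h0 => le_iInf fun h1 => ?_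
      have hkey : ∃ t ∈ Set.Icc (0:ℝ) 1, γ t = a ∨ γ t = b := by
        by_contra hcon
        push_neg at hcon
        set C : Set (EuclideanSpace ℝ (Fin 2)) :=
          (⋃ (x : V) (y : V) (_ : G.Adj x y) (_ : s(x, y) ≠ s(u, v)),
            segment ℝ (p x) (p y)) ∪ ⋃ (w : V), {p w} with hC
        have hCclosed : IsClosed C := by
          refine IsClosed.union ?_ ?_
          · exact isClosed_iUnion_of_finite fun x => isClosed_iUnion_of_finite fun y =>
              isClosed_iUnion_of_finite fun _ => isClosed_iUnion_of_finite fun _ =>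
              isClosed_segment' _ _
          · exact isClosed_iUnion_of_finite fun w => isClosed_singleton
        -- the open segment is disjoint from C
        have hopenC : ∀ x ∈ openSegment ℝ a b, x ∉ C := by
          intro x hx hxC
          rcases hxC with hxC | hxC
          · rw [Set.mem_iUnion] at hxC; obtain ⟨x', hxC⟩ := hxC
            rw [Set.mem_iUnion] at hxC; obtain ⟨y', hxC⟩ := hxC
            rw [Set.mem_iUnion] at hxC; obtain ⟨hadj', hxC⟩ := hxC
            rw [Set.mem_iUnion] at hxC; obtain ⟨hne, hxC⟩ := hxC
            rw [← insert_endpoints_openSegment] at hxC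
            rcases hxC with h | h | h
            · exact hvnot x' (h ▸ hx)
            · exact hvnot y' (h ▸ hx)
            · have := hplanar u v x' y' hadj hadj' (Ne.symm hne)
              exact Set.eq_empty_iff_forall_notMem.1 this x ⟨hx, h⟩
          · rw [Set.mem_iUnion] at hxC; obtain ⟨w', hxC⟩ := hxC
            rw [Set.mem_singleton_iff] at hxC
            exact hvnot w' (hxC ▸ hx)
        set U : Set (EuclideanSpace ℝ (Fin 2)) := Cᶜ ∩ ({a, b} : Set _)ᶜ with hUdef
        set W : Set (EuclideanSpace ℝ (Fin 2)) := (segment ℝ a b)ᶜ with hWdef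
        have hUopen : IsOpen U :=
          (hCclosed.isOpen_compl).inter (isOpen_compl_iff.2 (by
            rw [Set.insert_eq]
            exact isClosed_singleton.union isClosed_singleton))
        have hWopen : IsOpen W := (isClosed_segment' a b).isOpen_compl
        set M : Set (EuclideanSpace ℝ (Fin 2)) := γ '' Set.Icc 0 1 with hM
        have hMpre : IsPreconnected M := isPreconnected_Icc.image γ hcont
        -- M avoids a and b
        have hMab : ∀ x ∈ M, x ≠ a ∧ x ≠ b := by
          rintro x ⟨t, ht, rfl⟩
          exact ⟨fun h => (hcon t ht).1 h, fun h => (hcon t ht).2 h⟩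
        have hMS : M ⊆ S := by rintro x ⟨t, ht, rfl⟩; exact hmaps ht
        -- M ⊆ U ∪ W
        have hcover : M ⊆ U ∪ W := by
          intro x hx
          by_cases hxseg : x ∈ segment ℝ a b
          · left
            obtain ⟨hxa, hxb⟩ := hMab x hx
            have hxopen : x ∈ openSegment ℝ a b := by
              rw [← insert_endpoints_openSegment] at hxseg
              rcases hxseg with h | h | h
              · exact absurd h hxa
              · exact absurd h hxb
              · exact h
            refine ⟨hopenC x hxopen, ?_⟩
            simp only [Set.mem_compl_iff, Set.mem_insert_iff, Set.mem_singleton_iff]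
            push_neg
            exact ⟨hxa, hxb⟩
          · exact Or.inr hxseg
        -- M ∩ U nonempty (contains q)
        have hqM : q ∈ M := ⟨0, Set.left_mem_Icc.2 zero_le_one, h0⟩
        have hqU : q ∈ U := by
          refine ⟨hopenC q hqopen, ?_⟩
          simp only [Set.mem_compl_iff, Set.mem_insert_iff, Set.mem_singleton_iff]
          push_neg
          exact ⟨hqe.1, hqe.2⟩
        -- M ∩ W nonempty (contains p w)
        have hpwM : p w ∈ M := ⟨1, Set.right_mem_Icc.2 zero_le_one, h1⟩
        have hpwW : p w ∈ W := by
          intro hpw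
          obtain ⟨hwa, hwb⟩ := hMab _ hpwM
          rw [← insert_endpoints_openSegment] at hpw
          rcases hpw with h | h | h
          · exact hwa h
          · exact hwb h
          · exact hvnot w h
        -- but M ∩ U ∩ W is empty: contradiction with preconnectedness
        obtain ⟨x, hxM, hxU, hxW⟩ := hMpre U W hUopen hWopen hcover ⟨q, hqM, hqU⟩
          ⟨p w, hpwM, hpwW⟩
        have hxS := hMS hxM
        rw [hS] at hxS
        rcases hxS with hxS | hxS
        · rw [Set.mem_iUnion] at hxS; obtain ⟨x', hxS⟩ := hxS
          rw [Set.mem_iUnion] at hxS; obtain ⟨y', hxS⟩ := hxS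
          rw [Set.mem_iUnion] at hxS; obtain ⟨hadj', hxS⟩ := hxS
          by_cases hsym : s(x', y') = s(u, v)
          · rw [Sym2.eq_iff] at hsym
            have : x ∈ segment ℝ a b := by
              rcases hsym with ⟨h1', h2'⟩ | ⟨h1', h2'⟩
              · rw [ha, hb, ← h1', ← h2']; exact hxS
              · rw [ha, hb, ← h2', ← h1']; rw [segment_symm]; exact hxS
            exact hxW this
          · exact hxU.1 (Or.inl (Set.mem_iUnion.2 ⟨x', Set.mem_iUnion.2 ⟨y',
              Set.mem_iUnion.2 ⟨hadj', Set.mem_iUnion.2 ⟨hsym, hxS⟩⟩⟩⟩))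
        · rw [Set.mem_iUnion] at hxS; obtain ⟨w', hxS⟩ := hxS
          rw [Set.mem_iUnion] at hxS; obtain ⟨_, hxS⟩ := hxS
          exact hxU.1 (Or.inr (Set.mem_iUnion.2 ⟨w', hxS⟩))
      obtain ⟨t, ht, hta⟩ := hkey
      have hvar := eVariationOn.edist_le γ (Set.left_mem_Icc.2
        (zero_le_one (α := ℝ))) ht
      rw [h0] at hvar
      rcases hta with h | h
      · rw [h] at hvar
        exact le_trans (min_le_left _ _) hvar
      · rw [h] at hvar
        exact le_trans (min_le_right _ _) hvar
    rcases le_total (edist q a) (edist q b) with hcmp | hcmp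
    · refine ⟨u, fun w => ?_, Or.inl rfl⟩
      refine le_trans hua (le_trans ?_ (hlow w))
      simp [min_eq_left hcmp]
    · refine ⟨v, fun w => ?_, Or.inr hadj⟩
      refine le_trans hub (le_trans ?_ (hlow w))
      simp [min_eq_right hcmp]
end

section
/- Let u, v be points in ℝ² and let p be a point on the closed segment [u, v]. If w ∈ ℝ² satisfies d(p, w) < d(p, u) and d(p, w) < d(p, v), then w lies in the open disc whose diameter is the segment (u, v); equivalently, d(u, w)² + d(v, w)² < d(u, v)². -/
open scoped RealInnerProductSpace

/-- A point `w` strictly closer to some point `p` of the segment `[u, v]` than to both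
endpoints lies in the open disc of diameter `(u, v)`: the angle at `w` is obtuse, i.e.
`⟪w - u, w - v⟫ < 0`, equivalently `d(u,w)² + d(v,w)² < d(u,v)²`. -/
theorem closer_point_in_open_disc
    (u v p w : EuclideanSpace ℝ (Fin 2))
    (hp : p ∈ segment ℝ u v)
    (hwu : dist p w < dist p u) (hwv : dist p w < dist p v) :
    ⟪w - u, w - v⟫ < 0 ∧
      dist u w ^ 2 + dist v w ^ 2 < dist u v ^ 2 := by
  obtain ⟨a, b, ha, hb, hab, hpe⟩ := hp
  have hbe : b = 1 - a := by linarith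
  subst hbe
  set b := 1 - a with hbdef
  clear_value b
  have hpu : p - u = b • (v - u) := by rw [← hpe, hbdef]; module
  have hpv : p - v = a • (u - v) := by rw [← hpe, hbdef]; module
  have hdpu : dist p u = b * ‖v - u‖ := by
    rw [dist_eq_norm, hpu, norm_smul, Real.norm_eq_abs, abs_of_nonneg hb]
  have hdpv : dist p v = a * ‖v - u‖ := by
    rw [dist_eq_norm, hpv, norm_smul, Real.norm_eq_abs, abs_of_nonneg ha,
      norm_sub_rev]
  have hr0 : (0:ℝ) ≤ ‖w - p‖ := norm_nonneg _
  have hcs := abs_le.mp (abs_real_inner_le_norm (w - p) (v - u))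
  have hcs1 : ⟪w - p, v - u⟫ ≤ ‖w - p‖ * ‖v - u‖ := hcs.2
  have hcs2 : -(‖w - p‖ * ‖v - u‖) ≤ ⟪w - p, v - u⟫ := hcs.1
  have h1 : w - u = (w - p) + b • (v - u) := by rw [← hpe, hbdef]; module
  have h2 : w - v = (w - p) - a • (v - u) := by rw [← hpe, hbdef]; module
  have key : ⟪w - u, w - v⟫ =
      ‖w - p‖ ^ 2 + (b - a) * ⟪w - p, v - u⟫ - a * b * ‖v - u‖ ^ 2 := by
    rw [h1, h2, inner_sub_right, inner_add_left, inner_add_left,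
      real_inner_smul_left, real_inner_smul_right, real_inner_smul_left,
      real_inner_smul_right, real_inner_self_eq_norm_sq,
      real_inner_self_eq_norm_sq, real_inner_comm (v - u) (w - p)]
    ring
  have hrw : dist p w = ‖w - p‖ := by rw [dist_comm, dist_eq_norm]
  have hru : ‖w - p‖ < b * ‖v - u‖ := by rw [← hrw, ← hdpu]; exact hwu
  have hrv : ‖w - p‖ < a * ‖v - u‖ := by rw [← hrw, ← hdpv]; exact hwv
  have hneg : ⟪w - u, w - v⟫ < 0 := by
    rw [key]
    rcases le_total a b with h | h
    · nlinarith [mul_pos (show (0:ℝ) < ‖w - p‖ + b * ‖v - u‖ by linarith)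
        (show (0:ℝ) < a * ‖v - u‖ - ‖w - p‖ by linarith)]
    · nlinarith [mul_pos (show (0:ℝ) < ‖w - p‖ + a * ‖v - u‖ by linarith)
        (show (0:ℝ) < b * ‖v - u‖ - ‖w - p‖ by linarith)]
  refine ⟨hneg, ?_⟩
  have hid : dist u v ^ 2 = dist u w ^ 2 + dist v w ^ 2 - 2 * ⟪w - u, w - v⟫ := by
    rw [dist_eq_norm, dist_eq_norm, dist_eq_norm]
    have huv : u - v = (u - w) - (v - w) := by abel
    rw [huv, norm_sub_sq_real,
      show ⟪w - u, w - v⟫ = ⟪u - w, v - w⟫ by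
        rw [show u - w = -(w - u) by abel, show v - w = -(w - v) by abel,
          inner_neg_neg]]
    ring
  linarith
end

section
/- In the quasi unit disc graph model with radii r_min ≤ r_max ≤ √2 · r_min, suppose u and v are nodes with uv ∈ E(G) (so d(p_u, p_v) ≤ r_max), and let p be a point on the segment [p_u, p_v]. If w is a node with d(p, p_w) < d(p, p_u) and d(p, p_w) < d(p, p_v), then d(p_u, p_w) ≤ r_min or d(p_v, p_w) ≤ r_min; in particular w is a neighbor of u or of v in G, and hence uw is an edge of G². -/
private lemma qudg_aux {E : Type*} [NormedAddCommGroup E] [InnerProductSpace ℝ E]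
    (x y q w : E) (hq : q ∈ segment ℝ x y)
    (h1 : dist q w < dist q x) (h2 : dist q w < dist q y) :
    dist x w ^ 2 + dist y w ^ 2 < dist x y ^ 2 := by
  obtain ⟨a, b, ha, hb, hab, hsum⟩ := hq
  have ha' : a = 1 - b := by linarith
  subst ha'
  set m : E := (1/2 : ℝ) • (x + y) with hm
  have hqx : q - x = b • (y - x) := by rw [← hsum]; module
  have hqy : q - y = (1 - b) • (x - y) := by rw [← hsum]; module
  have hmq : m - q = (b - 1/2) • (x - y) := by rw [← hsum, hm]; module
  have hDx : dist q x = b * ‖x - y‖ := by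
    rw [dist_eq_norm, hqx, norm_smul, Real.norm_eq_abs, abs_of_nonneg hb, ← neg_sub x y, norm_neg]
  have hDy : dist q y = (1 - b) * ‖x - y‖ := by
    rw [dist_eq_norm, hqy, norm_smul, Real.norm_eq_abs, abs_of_nonneg (by linarith : (0:ℝ) ≤ 1 - b)]
  have hmqn : ‖m - q‖ = |b - 1/2| * ‖x - y‖ := by
    rw [hmq, norm_smul, Real.norm_eq_abs]
  have hmw : ‖m - w‖ ≤ ‖m - q‖ + ‖q - w‖ := by
    calc ‖m - w‖ = ‖(m - q) + (q - w)‖ := congrArg norm (by abel)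
    _ ≤ ‖m - q‖ + ‖q - w‖ := norm_add_le _ _
  have hqwn : dist q w = ‖q - w‖ := dist_eq_norm q w
  -- ‖m - w‖ < ‖x - y‖ / 2
  have hmw2 : ‖m - w‖ < ‖x - y‖ / 2 := by
    rcases abs_cases (b - 1/2) with ⟨he, _⟩ | ⟨he, _⟩ <;>
      [ (have := h2; rw [hDy, hqwn] at this);
        (have := h1; rw [hDx, hqwn] at this)] <;>
      rw [hmqn, he] at hmw <;> nlinarith [norm_nonneg (q - w)]
  have hpar := parallelogram_law_with_norm ℝ (x - w) (y - w)
  have e1 : (x - w) + (y - w) = (2 : ℝ) • (m - w) := by rw [hm]; module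
  have e2 : (x - w) - (y - w) = x - y := by abel
  rw [e1, e2, norm_smul] at hpar
  simp only [Real.norm_ofNat] at hpar
  have hxw : dist x w = ‖x - w‖ := dist_eq_norm x w
  have hyw : dist y w = ‖y - w‖ := dist_eq_norm y w
  have hxy : dist x y = ‖x - y‖ := dist_eq_norm x y
  rw [hxw, hyw, hxy]
  nlinarith [norm_nonneg (m - w), norm_nonneg (x - y)]

/-- Quasi unit disc graphs with `r_max ≤ √2 · r_min`: if `uv` is an edge and a node `w`
is strictly closer to a point `q` of the segment `[p_u, p_v]` than both `u` and `v`,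
then `w` is within range `r_min` of `u` or of `v`; in particular `w` is a neighbor of
`u` or of `v`, and `uw` is an edge of `G²`. -/
theorem qudg_two_hop
    {V : Type*} [Fintype V] (rmin rmax : ℝ) (hrmin : 0 < rmin)
    (hr1 : rmin ≤ rmax) (hr2 : rmax ≤ Real.sqrt 2 * rmin)
    (p : V → EuclideanSpace ℝ (Fin 2)) (hp : Function.Injective p)
    (G : SimpleGraph V)
    (hGmin : ∀ u v : V, u ≠ v → dist (p u) (p v) ≤ rmin → G.Adj u v)
    (hGmax : ∀ u v : V, G.Adj u v → dist (p u) (p v) ≤ rmax)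
    (u v w : V) (huv : G.Adj u v)
    (q : EuclideanSpace ℝ (Fin 2)) (hq : q ∈ segment ℝ (p u) (p v))
    (hwu : dist q (p w) < dist q (p u)) (hwv : dist q (p w) < dist q (p v)) :
    (dist (p u) (p w) ≤ rmin ∨ dist (p v) (p w) ≤ rmin) ∧
      (G.Adj u w ∨ G.Adj v w) ∧
      (G.Adj u w ∨ ∃ x : V, G.Adj u x ∧ G.Adj x w) := by
  have hkey := qudg_aux (p u) (p v) q (p w) hq hwu hwv
  have hD : dist (p u) (p v) ≤ rmax := hGmax u v huv
  have hsq : rmax ^ 2 ≤ 2 * rmin ^ 2 := by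
    have h2 : Real.sqrt 2 ^ 2 = 2 := Real.sq_sqrt (by norm_num)
    nlinarith [Real.sqrt_nonneg 2, hrmin.le]
  have hmain : dist (p u) (p w) ≤ rmin ∨ dist (p v) (p w) ≤ rmin := by
    by_contra h
    push_neg at h
    obtain ⟨h1, h2⟩ := h
    nlinarith [(dist_nonneg : (0:ℝ) ≤ dist (p u) (p v))]
  have hwu' : u ≠ w := by rintro rfl; exact absurd hwu (lt_irrefl _)
  have hwv' : v ≠ w := by rintro rfl; exact absurd hwv (lt_irrefl _)
  refine ⟨hmain, ?_, ?_⟩ <;> rcases hmain with h | h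
  · exact Or.inl (hGmin u w hwu' h)
  · exact Or.inr (hGmin v w hwv' h)
  · exact Or.inl (hGmin u w hwu' h)
  · exact Or.inr ⟨v, huv, hGmin v w hwv' h⟩
end
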